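/- Let x : [0,∞) → ℝ solve ẋ(t) = a x(t) + b x(qt) with a > 0, b > 0, 0 < q < 1, and x(0) > 0. Then x(t) > 0 for all t ≥ 0 and x is strictly increasing; in fact x(t) ≥ x(0) e^{a t} for all t ≥ 0. -/

import Mathlib

theorem stmt_8 (a b q : ℝ) (ha : 0 < a) (hb : 0 < b) (hq0 : 0 < q) (hq1 : q < 1)
    (x : ℝ → ℝ)
    (hx : ∀ t : ℝ, 0 ≤ t → HasDerivAt x (a * x t + b * x (q * t)) t)
    (hx0 : 0 < x 0) :
    (∀ t : ℝ, 0 ≤ t → 0 < x t) ∧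
    StrictMonoOn x (Set.Ici 0) ∧
    (∀ t : ℝ, 0 ≤ t → x 0 * Real.exp (a * t) ≤ x t) := by
  have hcont : ∀ t : ℝ, 0 ≤ t → ContinuousAt x t := fun t ht => (hx t ht).continuousAt
  -- Part 1: positivity
  have hpos : ∀ t : ℝ, 0 ≤ t → 0 < x t := by
    by_contra h
    push_neg at h
    obtain ⟨t₀, ht₀, hxt₀⟩ := h
    set S : Set ℝ := {t | 0 ≤ t ∧ x t ≤ 0} with hS
    have hSne : S.Nonempty := ⟨t₀, ht₀, hxt₀⟩
    have hSbdd : BddBelow S := ⟨0, fun s hs => hs.1⟩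
    set T := sInf S with hT
    have hT0 : 0 ≤ T := le_csInf hSne (fun s hs => hs.1)
    have hTcl : T ∈ closure S := csInf_mem_closure hSne hSbdd
    have hxT : x T ≤ 0 := by
      have hne : (nhdsWithin T S).NeBot := mem_closure_iff_nhdsWithin_neBot.mp hTcl
      have htend : Filter.Tendsto x (nhdsWithin T S) (nhds (x T)) :=
        (hcont T hT0).continuousWithinAt
      exact le_of_tendsto htend (eventually_nhdsWithin_of_forall (fun s hs => hs.2))
    have hTpos : 0 < T := by
      rcases lt_or_eq_of_le hT0 with h | h
      · exact h
      · exact absurd hxT (by rw [← h]; exact not_le.mpr hx0)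
    -- x > 0 on [0, T)
    have hlt : ∀ s : ℝ, 0 ≤ s → s < T → 0 < x s := by
      intro s hs hsT
      by_contra hc
      push_neg at hc
      exact absurd (csInf_le hSbdd ⟨hs, hc⟩) (not_le.mpr hsT)
    -- x strictly increasing on [0, T]
    have hmono : StrictMonoOn x (Set.Icc 0 T) := by
      apply strictMonoOn_of_deriv_pos (convex_Icc 0 T)
      · exact fun s hs => (hcont s hs.1).continuousWithinAt
      · intro s hs
        rw [interior_Icc] at hs
        rw [(hx s hs.1.le).deriv]
        have h1 : 0 < x s := hlt s hs.1.le hs.2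
        have hs1 := hs.1
        have h2 : 0 < x (q * s) := hlt (q * s) (mul_nonneg hq0.le hs1.le)
          (lt_trans (by nlinarith) hs.2)
        positivity
    have : x 0 < x T := hmono ⟨le_refl 0, hT0⟩ ⟨hT0, le_refl T⟩ hTpos
    linarith
  refine ⟨hpos, ?_, ?_⟩
  · apply strictMonoOn_of_deriv_pos (convex_Ici 0)
    · exact fun s hs => (hcont s hs).continuousWithinAt
    · intro s hs
      rw [interior_Ici] at hs
      rw [(hx s hs.le).deriv]
      have h1 : 0 < x s := hpos s hs.le
      have h2 : 0 < x (q * s) := hpos (q * s) (mul_nonneg hq0.le hs.le)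
      positivity
  · intro t ht
    set g : ℝ → ℝ := fun t => x t * Real.exp (-a * t) with hg
    have hgd : ∀ s : ℝ, 0 ≤ s →
        HasDerivAt g (b * x (q * s) * Real.exp (-a * s)) s := by
      intro s hs
      have h1 : HasDerivAt (fun u => Real.exp (-a * u)) (Real.exp (-a * s) * -a) s := by
        simpa using ((hasDerivAt_id s).const_mul (-a)).exp
      have this : HasDerivAt (fun u => x u * Real.exp (-a * u))
          ((a * x s + b * x (q * s)) * Real.exp (-a * s) + x s * (Real.exp (-a * s) * -a)) s :=
        (hx s hs).mul h1
      convert this using 1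
      ring
    have hgm : MonotoneOn g (Set.Ici 0) := by
      apply monotoneOn_of_deriv_nonneg (convex_Ici 0)
      · exact fun s hs => ((hgd s hs).continuousAt).continuousWithinAt
      · intro s hs
        rw [interior_Ici] at hs
        exact ((hgd s hs.le).differentiableAt).differentiableWithinAt
      · intro s hs
        rw [interior_Ici] at hs
        rw [(hgd s hs.le).deriv]
        have h2 : 0 < x (q * s) := hpos (q * s) (mul_nonneg hq0.le hs.le)
        positivity
    have h1 : g 0 ≤ g t := hgm (Set.mem_Ici.mpr (le_refl 0)) ht ht
    have h2 : g 0 = x 0 := by simp [hg]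
    have h3 : x 0 ≤ x t * Real.exp (-a * t) := by rw [← h2]; exact h1
    have h4 : Real.exp (-a * t) * Real.exp (a * t) = 1 := by
      rw [← Real.exp_add]; ring_nf; exact Real.exp_zero
    nlinarith [Real.exp_pos (a * t), Real.exp_pos (-a * t)]
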